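/- arXiv:1012.0931 — 4 statements merged into one kernel-verified Lean document; each statement's English description precedes it below -/
import Mathlib

section
/- Let alpha_1, ..., alpha_d be pairwise non-proportional linear forms in C[x,y,z], alpha their product, and l_i = alpha/alpha_i. If p is a point lying on exactly the lines V(alpha_1),...,V(alpha_m) (m >= 2) and on none of the others, then after localizing at the ideal of p, the ideal generated by l_1,...,l_d equals the (m-1)-st power of the maximal ideal of p localized, i.e., the localization of I_p^{m-1}. -/
open MvPolynomial

lemma finsupp_degree_one {σ : Type*} (d : σ →₀ ℕ) (h : d.degree = 1) :
    ∃ k, d = Finsupp.single k 1 := by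
  have hne : d.support.Nonempty := by
    rw [Finset.nonempty_iff_ne_empty]
    intro he
    simp [Finsupp.degree_apply, he] at h
  obtain ⟨k, hk⟩ := hne
  have hcard : d.support.card ≤ 1 := by
    by_contra hc
    push_neg at hc
    have : 2 ≤ ∑ i ∈ d.support, d i := by
      calc 2 ≤ d.support.card := hc
      _ = ∑ i ∈ d.support, 1 := by simp
      _ ≤ ∑ i ∈ d.support, d i := Finset.sum_le_sum (fun i hi => Nat.one_le_iff_ne_zero.2 (Finsupp.mem_support_iff.1 hi))
    rw [Finsupp.degree_apply] at h; omega
  have hsupp : d.support = {k} := by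
    apply Finset.eq_singleton_iff_unique_mem.2
    exact ⟨hk, fun x hx => Finset.card_le_one.1 hcard x hx k hk⟩
  have hd1 : d k = 1 := by
    have := h
    rw [Finsupp.degree_apply, hsupp] at this
    simpa using this
  exact ⟨k, by
    obtain ⟨-, h2⟩ := Finsupp.support_eq_singleton.1 hsupp
    rw [h2, hd1]⟩

lemma coeff_sum_CX {σ : Type*} [Fintype σ] [DecidableEq σ] (c : σ → ℂ) (k : σ) :
    MvPolynomial.coeff (Finsupp.single k 1) (∑ j, MvPolynomial.C (c j) * MvPolynomial.X j) = c k := by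
  rw [MvPolynomial.coeff_sum]
  rw [Finset.sum_eq_single k]
  · simp [MvPolynomial.C_mul_X_eq_monomial, MvPolynomial.coeff_monomial]
  · intro j _ hj
    simp [MvPolynomial.C_mul_X_eq_monomial, MvPolynomial.coeff_monomial,
      Finsupp.single_left_inj one_ne_zero, hj]
  · simp

/-- A homogeneous degree-1 polynomial is a sum of `C c * X k`. -/
lemma lin_rep {σ : Type*} [Fintype σ] [DecidableEq σ] (φ : MvPolynomial σ ℂ)
    (hφ : φ.IsHomogeneous 1) :
    φ = ∑ k, MvPolynomial.C (MvPolynomial.coeff (Finsupp.single k 1) φ) * MvPolynomial.X k := by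
  apply MvPolynomial.ext
  intro d
  rw [MvPolynomial.coeff_sum]
  by_cases hd : d.degree = 1
  · obtain ⟨k, rfl⟩ := finsupp_degree_one d hd
    rw [Finset.sum_eq_single k]
    · simp [MvPolynomial.C_mul_X_eq_monomial, MvPolynomial.coeff_monomial]
    · intro j _ hj
      simp [MvPolynomial.C_mul_X_eq_monomial, MvPolynomial.coeff_monomial,
        Finsupp.single_left_inj one_ne_zero, hj]
    · simp
  · rw [hφ.coeff_eq_zero hd]
    symm
    apply Finset.sum_eq_zero
    intro j _
    simp only [MvPolynomial.C_mul_X_eq_monomial, MvPolynomial.coeff_monomial]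
    rw [if_neg]
    intro he
    apply hd
    rw [← he]
    simp [Finsupp.degree_apply, Finsupp.support_single_ne_zero]

noncomputable def dotl (p : Fin 3 → ℂ) : (Fin 3 → ℂ) →ₗ[ℂ] ℂ where
  toFun v := ∑ k, v k * p k
  map_add' u v := by simp [add_mul, Finset.sum_add_distrib]
  map_smul' s v := by simp [Finset.mul_sum, mul_assoc]

lemma ker_span (p : Fin 3 → ℂ) (hp : p ≠ 0) (a b c : Fin 3 → ℂ)
    (ha : ∑ k, a k * p k = 0) (hb : ∑ k, b k * p k = 0) (hc : ∑ k, c k * p k = 0)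
    (hab : LinearIndependent ℂ ![a, b]) : ∃ s t : ℂ, c = s • a + t • b := by
  set K := LinearMap.ker (dotl p) with hK
  have hsurj : LinearMap.range (dotl p) = ⊤ := by
    obtain ⟨k0, hk0⟩ := Function.ne_iff.1 hp
    have hk0' : p k0 ≠ 0 := by simpa using hk0
    rw [LinearMap.range_eq_top]
    intro x
    refine ⟨(x / p k0) • (Pi.single k0 1 : Fin 3 → ℂ), ?_⟩
    have : dotl p (Pi.single k0 1) = p k0 := by
      simp only [dotl, LinearMap.coe_mk, AddHom.coe_mk]
      rw [Finset.sum_eq_single k0] <;> simp_all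
    rw [map_smul, this]
    exact div_mul_cancel₀ x hk0'
  have hrank : Module.finrank ℂ K = 2 := by
    have h1 := LinearMap.finrank_range_add_finrank_ker (dotl p)
    rw [hsurj] at h1
    simp only [finrank_top, Module.finrank_self] at h1
    have h2 : Module.finrank ℂ (Fin 3 → ℂ) = 3 := by simp
    rw [hK]
    omega
  have haK : a ∈ K := by simpa [hK, dotl, LinearMap.mem_ker] using ha
  have hbK : b ∈ K := by simpa [hK, dotl, LinearMap.mem_ker] using hb
  have hcK : c ∈ K := by simpa [hK, dotl, LinearMap.mem_ker] using hc
  have hle : Submodule.span ℂ {a, b} ≤ K := by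
    rw [Submodule.span_le]
    rintro x (rfl | rfl) <;> assumption
  have hspan : Submodule.span ℂ {a, b} = K := by
    apply Submodule.eq_of_le_of_finrank_le hle
    rw [hrank]
    have : Submodule.span ℂ {a, b} = Submodule.span ℂ (Set.range ![a, b]) := by
      congr 1
      simp [Matrix.range_cons, Matrix.range_empty, Set.pair_comm]
    rw [this, finrank_span_eq_card hab]
    simp
  have : c ∈ Submodule.span ℂ {a, b} := hspan ▸ hcK
  obtain ⟨s, t, hst⟩ := Submodule.mem_span_pair.1 this
  exact ⟨s, t, hst.symm⟩

lemma deg2 (d : Fin 2 →₀ ℕ) : d.degree = d 0 + d 1 := by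
  rw [Finsupp.degree_apply]
  rw [Finset.sum_subset (Finset.subset_univ d.support)]
  · simp [Fin.sum_univ_two]
  · intro x _ hx
    simpa using hx

lemma finsupp2_ext {d d' : Fin 2 →₀ ℕ} (h0 : d 0 = d' 0) (h1 : d 1 = d' 1) : d = d' := by
  ext x
  fin_cases x
  · exact h0
  · exact h1

/-- A homogeneous binary form of degree `n` lies in the span of the `n+1` monomials. -/
lemma mem_monomial_span (m n : ℕ) (hmn : m = n + 1) (φ : MvPolynomial (Fin 2) ℂ)
    (hφ : φ.IsHomogeneous n) :
    φ ∈ Submodule.span ℂ (Set.range fun j : Fin m =>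
      (MvPolynomial.monomial (Finsupp.single 0 (j : ℕ) + Finsupp.single 1 (n - (j : ℕ)))
        (1 : ℂ))) := by
  nth_rewrite 1 [φ.as_sum]
  apply Submodule.sum_mem
  intro d hd
  have hdeg : d.degree = n := by
    by_contra h
    exact (MvPolynomial.mem_support_iff.1 hd) (hφ.coeff_eq_zero h)
  have hd0 : d 0 ≤ n := by rw [deg2] at hdeg; omega
  have hdlt : d 0 < m := by omega
  have hdeq : (Finsupp.single (0 : Fin 2) (((⟨d 0, hdlt⟩ : Fin m)) : ℕ)
      + Finsupp.single 1 (n - (((⟨d 0, hdlt⟩ : Fin m)) : ℕ))) = d := by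
    apply finsupp2_ext
    · simp
    · rw [deg2] at hdeg
      simp only [Finsupp.add_apply]
      rw [Finsupp.single_apply, Finsupp.single_apply]
      simp only [Fin.mk.injEq]
      norm_num
      omega
  have : (MvPolynomial.monomial d) (MvPolynomial.coeff d φ)
      = MvPolynomial.coeff d φ • (MvPolynomial.monomial (Finsupp.single (0 : Fin 2)
        (((⟨d 0, hdlt⟩ : Fin m)) : ℕ) + Finsupp.single 1 (n - (((⟨d 0, hdlt⟩ : Fin m)) : ℕ)))
        (1 : ℂ)) := by
    rw [MvPolynomial.smul_monomial, smul_eq_mul, mul_one, hdeq]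
  rw [this]
  exact Submodule.smul_mem _ _ (Submodule.subset_span ⟨⟨d 0, hdlt⟩, rfl⟩)

/-- Lagrange interpolation for binary forms. -/
lemma lagrange_span (m : ℕ) (hm : 1 ≤ m) (s t : Fin m → ℂ)
    (hdet : ∀ i j, i ≠ j → s i * t j - s j * t i ≠ 0)
    (a b : ℕ) (hab : a + b = m - 1) :
    ∃ c : Fin m → ℂ, (MvPolynomial.X 0 : MvPolynomial (Fin 2) ℂ) ^ a * MvPolynomial.X 1 ^ b
      = ∑ i, MvPolynomial.C (c i) * ∏ k ∈ Finset.univ.erase i,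
          (MvPolynomial.C (s k) * MvPolynomial.X 0 + MvPolynomial.C (t k) * MvPolynomial.X 1) := by
  classical
  have hmn : m = (m - 1) + 1 := by omega
  set n := m - 1 with hn
  set L : Fin m → MvPolynomial (Fin 2) ℂ := fun k =>
    MvPolynomial.C (s k) * MvPolynomial.X 0 + MvPolynomial.C (t k) * MvPolynomial.X 1 with hLdef
  have hL : ∀ k, (L k).IsHomogeneous 1 := by
    intro k
    apply MvPolynomial.IsHomogeneous.add
    · simpa using (MvPolynomial.isHomogeneous_X ℂ (0 : Fin 2)).C_mul (s k)
    · simpa using (MvPolynomial.isHomogeneous_X ℂ (1 : Fin 2)).C_mul (t k)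
  set P : Fin m → MvPolynomial (Fin 2) ℂ := fun i => ∏ k ∈ Finset.univ.erase i, L k with hPdef
  have hP : ∀ i, (P i).IsHomogeneous n := by
    intro i
    have := MvPolynomial.IsHomogeneous.prod (Finset.univ.erase i) L (fun _ => 1)
      (fun k _ => hL k)
    simpa [Finset.card_erase_of_mem, hn] using this
  set q : Fin m → (Fin 2 → ℂ) := fun j => ![t j, -s j] with hq
  have hevalL : ∀ j k, MvPolynomial.eval (q j) (L k) = s k * t j - s j * t k := by
    intro j k
    simp [hLdef, hq]
    ring
  have hevalP0 : ∀ i j, i ≠ j → MvPolynomial.eval (q j) (P i) = 0 := by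
    intro i j hij
    rw [hPdef]
    simp only [map_prod]
    apply Finset.prod_eq_zero (Finset.mem_erase.2 ⟨Ne.symm hij, Finset.mem_univ j⟩)
    rw [hevalL]
    ring
  have hevalPne : ∀ j, MvPolynomial.eval (q j) (P j) ≠ 0 := by
    intro j
    rw [hPdef]
    simp only [map_prod]
    rw [Finset.prod_ne_zero_iff]
    intro k hk
    rw [hevalL]
    exact hdet k j (Finset.mem_erase.1 hk).1
  have Plin : LinearIndependent ℂ P := by
    rw [Fintype.linearIndependent_iff]
    intro g hg j
    have := congrArg (MvPolynomial.eval (q j)) hg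
    rw [map_sum, map_zero] at this
    rw [Finset.sum_eq_single j] at this
    · have hne := hevalPne j
      simp only [MvPolynomial.smul_eval] at this
      exact (mul_eq_zero.1 this).resolve_right hne
    · intro i _ hij
      simp [MvPolynomial.smul_eval, hevalP0 i j hij]
    · simp
  have einj : Function.Injective (fun j : Fin m =>
      (Finsupp.single (0 : Fin 2) (j : ℕ) + Finsupp.single 1 (n - (j : ℕ)))) := by
    intro i j hij
    have h := congrArg (fun f : Fin 2 →₀ ℕ => f 0) hij
    simp at h
    exact Fin.ext h
  have hMlin : LinearIndependent ℂ (fun j : Fin m => (MvPolynomial.monomial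
      (Finsupp.single (0 : Fin 2) (j : ℕ) + Finsupp.single 1 (n - (j : ℕ))) (1 : ℂ))) := by
    have hb := (MvPolynomial.basisMonomials (Fin 2) ℂ).linearIndependent.comp _ einj
    simpa [MvPolynomial.coe_basisMonomials, Function.comp_def, -Finsupp.single_tsub] using hb
  set V' : Submodule ℂ (MvPolynomial (Fin 2) ℂ) :=
    Submodule.span ℂ (Set.range fun j : Fin m => (MvPolynomial.monomial
      (Finsupp.single (0 : Fin 2) (j : ℕ) + Finsupp.single 1 (n - (j : ℕ))) (1 : ℂ))) with hV'
  haveI : FiniteDimensional ℂ V' := FiniteDimensional.span_of_finite ℂ (Set.finite_range _)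
  have hV'rank : Module.finrank ℂ V' = m := by
    rw [hV', finrank_span_eq_card hMlin, Fintype.card_fin]
  have hPV : ∀ i, P i ∈ V' := fun i => mem_monomial_span m n hmn (P i) (hP i)
  have hspanP : Submodule.span ℂ (Set.range P) = V' := by
    apply Submodule.eq_of_le_of_finrank_le
    · rw [Submodule.span_le]
      rintro x ⟨i, rfl⟩
      exact hPV i
    · rw [hV'rank, finrank_span_eq_card Plin, Fintype.card_fin]
  have ham : a < m := by omega
  have htar : (MvPolynomial.X 0 : MvPolynomial (Fin 2) ℂ) ^ a * MvPolynomial.X 1 ^ b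
      = MvPolynomial.monomial (Finsupp.single (0 : Fin 2) (((⟨a, ham⟩ : Fin m)) : ℕ)
          + Finsupp.single 1 (n - (((⟨a, ham⟩ : Fin m)) : ℕ))) 1 := by
    rw [MvPolynomial.X_pow_eq_monomial, MvPolynomial.X_pow_eq_monomial,
      MvPolynomial.monomial_mul, mul_one]
    have hb' : b = n - a := by omega
    simp only [Fin.val_mk, hb']
  have hmem : (MvPolynomial.X 0 : MvPolynomial (Fin 2) ℂ) ^ a * MvPolynomial.X 1 ^ b ∈
      Submodule.span ℂ (Set.range P) := by
    rw [hspanP, htar]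
    exact Submodule.subset_span ⟨_, rfl⟩
  rw [Submodule.mem_span_range_iff_exists_fun ℂ] at hmem
  obtain ⟨c, hc⟩ := hmem
  refine ⟨c, ?_⟩
  rw [← hc]
  apply Finset.sum_congr rfl
  intro i _
  rw [MvPolynomial.smul_eq_C_mul]

lemma eval_sum_CX (p : Fin 3 → ℂ) (c : Fin 3 → ℂ) :
    MvPolynomial.eval p (∑ k, MvPolynomial.C (c k) * MvPolynomial.X k) = ∑ k, c k * p k := by
  simp

lemma sum_CX_comb (u v : Fin 3 → ℂ) (s t : ℂ) :
    (∑ k, MvPolynomial.C (s * u k + t * v k) * MvPolynomial.X k : MvPolynomial (Fin 3) ℂ)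
      = MvPolynomial.C s * (∑ k, MvPolynomial.C (u k) * MvPolynomial.X k)
        + MvPolynomial.C t * (∑ k, MvPolynomial.C (v k) * MvPolynomial.X k) := by
  rw [Finset.mul_sum, Finset.mul_sum, ← Finset.sum_add_distrib]
  apply Finset.sum_congr rfl
  intro k _
  simp only [map_add, map_mul]
  ring

lemma ideal_prod_mem_pow {R ι : Type*} [CommRing R] [DecidableEq ι] (I : Ideal R)
    (s : Finset ι) (f : ι → R) (h : ∀ k ∈ s, f k ∈ I) :
    ∏ k ∈ s, f k ∈ I ^ s.card := by
  induction s using Finset.cons_induction_on with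
  | empty => simp [Ideal.one_eq_top]
  | @cons x s' hx ih =>
    rw [Finset.prod_cons, Finset.card_cons, pow_succ, mul_comm (I ^ s'.card)]
    exact Ideal.mul_mem_mul (h x (Finset.mem_cons_self x s'))
      (ih fun k hk => h k (Finset.mem_cons_of_mem hk))

/-- the ideal `{y | A * y ∈ J}` -/
def divIdeal {R : Type*} [CommRing R] (A : R) (J : Ideal R) : Ideal R where
  carrier := {y | A * y ∈ J}
  zero_mem' := by simp
  add_mem' := fun {x y} hx hy => by
    simp only [Set.mem_setOf_eq, mul_add] at *
    exact J.add_mem hx hy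
  smul_mem' := fun c y hy => by
    simp only [Set.mem_setOf_eq, smul_eq_mul] at *
    rw [mul_left_comm]
    exact J.mul_mem_left c hy

lemma span_pair_pow_le {R : Type*} [CommRing R] (A B : R) (n : ℕ) (J : Ideal R)
    (h : ∀ a b : ℕ, a + b = n → A ^ a * B ^ b ∈ J) : (Ideal.span {A, B}) ^ n ≤ J := by
  induction n generalizing J with
  | zero =>
    intro x _
    have h1 : (1 : R) ∈ J := by simpa using h 0 0 rfl
    simpa using J.mul_mem_left x h1
  | succ n ih =>
    rw [pow_succ, mul_comm]
    rw [Ideal.mul_le]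
    intro r hr x hx
    obtain ⟨u, v, huv⟩ := Ideal.mem_span_pair.1 hr
    have hA : A * x ∈ J := by
      refine ih (divIdeal A J) (fun a b hab => ?_) hx
      show A * (A ^ a * B ^ b) ∈ J
      have : A * (A ^ a * B ^ b) = A ^ (a + 1) * B ^ b := by ring
      rw [this]
      exact h (a + 1) b (by omega)
    have hB : B * x ∈ J := by
      refine ih (divIdeal B J) (fun a b hab => ?_) hx
      show B * (A ^ a * B ^ b) ∈ J
      have : B * (A ^ a * B ^ b) = A ^ a * B ^ (b + 1) := by ring
      rw [this]
      exact h a (b + 1) (by omega)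
    have : r * x = u * (A * x) + v * (B * x) := by rw [← huv]; ring
    rw [this]
    exact J.add_mem (J.mul_mem_left u hA) (J.mul_mem_left v hB)

set_option maxHeartbeats 1000000 in
/-- Lemma 3.1: if `p` lies exactly on the lines `V(α_1),…,V(α_m)` (indices
`i < m`, with `m ≥ 2`) of the arrangement `V(α_1 ⋯ α_d)` and on none of the
others, then after localizing at the homogeneous prime `I_p` of the point,
the ideal generated by `l_i = α/α_i` equals the localization of `I_p^{m-1}`. -/
theorem localization_of_OT_ideal (d m : ℕ) (hm : 2 ≤ m) (hmd : m ≤ d)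
    (α : Fin d → MvPolynomial (Fin 3) ℂ)
    (hlin : ∀ i, (α i).IsHomogeneous 1)
    (hnp : ∀ i j : Fin d, i ≠ j → ∀ c : ℂ, α i ≠ MvPolynomial.C c * α j)
    (p : Fin 3 → ℂ) (hp : p ≠ 0)
    (hvan : ∀ i : Fin d, MvPolynomial.eval p (α i) = 0 ↔ (i : ℕ) < m)
    (Ip : Ideal (MvPolynomial (Fin 3) ℂ))
    (hIp : Ip = Ideal.span {f : MvPolynomial (Fin 3) ℂ |
      (∃ c : Fin 3 → ℂ, f = ∑ k, MvPolynomial.C (c k) * MvPolynomial.X k) ∧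
      MvPolynomial.eval p f = 0})
    [Ip.IsPrime]
    (l : Fin d → MvPolynomial (Fin 3) ℂ)
    (hl : ∀ i, l i = ∏ k ∈ Finset.univ.erase i, α k) :
    Ideal.map (algebraMap (MvPolynomial (Fin 3) ℂ) (Localization.AtPrime Ip))
        (Ideal.span (Set.range l))
      = Ideal.map (algebraMap (MvPolynomial (Fin 3) ℂ) (Localization.AtPrime Ip))
        (Ip ^ (m - 1)) := by
  classical
  have hd2 : 2 ≤ d := le_trans hm hmd
  have hm1 : 1 ≤ m := by omega
  set F := algebraMap (MvPolynomial (Fin 3) ℂ) (Localization.AtPrime Ip) with hF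
  set i0 : Fin d := ⟨0, by omega⟩ with hi0
  set i1 : Fin d := ⟨1, by omega⟩ with hi1
  set A := α i0 with hA
  set B := α i1 with hB
  have hi01 : i0 ≠ i1 := by simp [hi0, hi1, Fin.ext_iff]
  have h0m : (i0 : ℕ) < m := by simp [hi0]; omega
  have h1m : (i1 : ℕ) < m := by simp [hi1]; omega
  -- all elements of Ip vanish at p
  have hIple : ∀ x ∈ Ip, MvPolynomial.eval p x = 0 := by
    intro x hx
    rw [hIp] at hx
    have hker : Ideal.span {f : MvPolynomial (Fin 3) ℂ |
        (∃ c : Fin 3 → ℂ, f = ∑ k, MvPolynomial.C (c k) * MvPolynomial.X k) ∧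
        MvPolynomial.eval p f = 0} ≤ RingHom.ker (MvPolynomial.eval p) := by
      rw [Ideal.span_le]
      rintro f ⟨-, hf⟩
      exact hf
    exact hker hx
  -- linear forms vanishing at p are combinations of A and B
  have hspanlin : ∀ f : MvPolynomial (Fin 3) ℂ,
      (∃ c : Fin 3 → ℂ, f = ∑ k, MvPolynomial.C (c k) * MvPolynomial.X k) →
      MvPolynomial.eval p f = 0 →
      ∃ s t : ℂ, f = MvPolynomial.C s * A + MvPolynomial.C t * B := by
    rintro f ⟨c, hc⟩ hf0
    set aa : Fin 3 → ℂ := fun k => MvPolynomial.coeff (Finsupp.single k 1) A with haa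
    set bb : Fin 3 → ℂ := fun k => MvPolynomial.coeff (Finsupp.single k 1) B with hbb
    have hArep : A = ∑ k, MvPolynomial.C (aa k) * MvPolynomial.X k := lin_rep A (hlin i0)
    have hBrep : B = ∑ k, MvPolynomial.C (bb k) * MvPolynomial.X k := lin_rep B (hlin i1)
    have hAp : ∑ k, aa k * p k = 0 := by
      rw [← eval_sum_CX, ← hArep]
      exact (hvan i0).2 h0m
    have hBp : ∑ k, bb k * p k = 0 := by
      rw [← eval_sum_CX, ← hBrep]
      exact (hvan i1).2 h1m
    have hcp : ∑ k, c k * p k = 0 := by rw [← eval_sum_CX, ← hc]; exact hf0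
    have hab : LinearIndependent ℂ ![aa, bb] := by
      rw [LinearIndependent.pair_iff]
      intro s t hst
      by_contra hcon
      have hcomb : MvPolynomial.C s * A + MvPolynomial.C t * B = 0 := by
        rw [hArep, hBrep, ← sum_CX_comb]
        have hzz : ∀ k, s * aa k + t * bb k = 0 := by
          intro k
          simpa using congrFun hst k
        simp [hzz]
      by_cases ht : t = 0
      · have hs : s ≠ 0 := by tauto
        rw [ht] at hcomb
        simp only [map_zero, zero_mul, add_zero] at hcomb
        have hA0 : A = 0 := by
          rcases mul_eq_zero.1 hcomb with h | h
          · exact absurd (by simpa using h) hs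
          · exact h
        exact hnp i0 i1 hi01 0 (by rw [← hA, hA0]; simp)
      · have hCt : (MvPolynomial.C t : MvPolynomial (Fin 3) ℂ) ≠ 0 := fun h =>
          ht (by simpa using h)
        have hBeq : B = MvPolynomial.C (-s / t) * A := by
          apply mul_left_cancel₀ hCt
          have h1 : MvPolynomial.C t * B = -(MvPolynomial.C s * A) := by
            linear_combination hcomb
          rw [h1, ← mul_assoc, ← map_mul]
          have htt : t * (-s / t) = -s := by
            rw [mul_comm, div_mul_cancel₀ _ ht]
          rw [htt, map_neg]
          ring
        exact hnp i1 i0 hi01.symm (-s / t) (by rw [← hB, ← hA]; exact hBeq)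
    obtain ⟨s, t, hstc⟩ := ker_span p hp aa bb c hAp hBp hcp hab
    refine ⟨s, t, ?_⟩
    rw [hc, hArep, hBrep, ← sum_CX_comb]
    apply Finset.sum_congr rfl
    intro k _
    congr 1
    rw [hstc]
    simp
  -- linear forms among the first m lie in Ip
  have hmemIp : ∀ i : Fin d, (i : ℕ) < m → α i ∈ Ip := by
    intro i hi
    rw [hIp]
    apply Ideal.subset_span
    exact ⟨⟨_, lin_rep (α i) (hlin i)⟩, (hvan i).2 hi⟩
  -- Ip is generated by A and B
  have hIpspan : Ip = Ideal.span {A, B} := by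
    apply le_antisymm
    · conv_lhs => rw [hIp]
      rw [Ideal.span_le]
      rintro f ⟨hf1, hf2⟩
      obtain ⟨s, t, hst⟩ := hspanlin f hf1 hf2
      rw [hst]
      exact Ideal.mem_span_pair.2 ⟨_, _, rfl⟩
    · rw [Ideal.span_le]
      intro x hx
      rcases Set.mem_insert_iff.1 hx with rfl | hx'
      · exact hmemIp i0 h0m
      · rw [Set.mem_singleton_iff.1 hx']
        exact hmemIp i1 h1m
  -- decomposition of the first m forms
  have hdec : ∀ k : Fin m, ∃ s t : ℂ,
      α (Fin.castLE hmd k) = MvPolynomial.C s * A + MvPolynomial.C t * B := by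
    intro k
    apply hspanlin _ ⟨_, lin_rep _ (hlin _)⟩
    apply (hvan _).2
    simpa using k.isLt
  choose s t hst using hdec
  have hwnz : ∀ k : Fin m, ¬(s k = 0 ∧ t k = 0) := by
    rintro k ⟨hs0, ht0⟩
    have hz : α (Fin.castLE hmd k) = 0 := by rw [hst k, hs0, ht0]; simp
    by_cases hk : Fin.castLE hmd k = i0
    · exact hnp (Fin.castLE hmd k) i1 (by rw [hk]; exact hi01) 0 (by rw [hz]; simp)
    · exact hnp (Fin.castLE hmd k) i0 hk 0 (by rw [hz]; simp)
  have hdetst : ∀ i j : Fin m, i ≠ j → s i * t j - s j * t i ≠ 0 := by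
    intro i j hij heq
    have hcij : Fin.castLE hmd i ≠ Fin.castLE hmd j :=
      fun h => hij (Fin.castLE_injective hmd h)
    by_cases hsi : s i = 0
    · have hti : t i ≠ 0 := fun h => hwnz i ⟨hsi, h⟩
      have hsj : s j = (t j / t i) * s i := by
        rw [hsi, mul_zero]
        rw [hsi] at heq
        have : s j * t i = 0 := by linear_combination -heq
        rcases mul_eq_zero.1 this with h | h
        · exact h
        · exact absurd h hti
      have htj : t j = (t j / t i) * t i := (div_mul_cancel₀ _ hti).symm
      apply hnp (Fin.castLE hmd j) (Fin.castLE hmd i) hcij.symm (t j / t i)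
      rw [hst j, hst i, mul_add, ← mul_assoc, ← map_mul, ← mul_assoc, ← map_mul, ← hsj, ← htj]
    · have hsj : s j = (s j / s i) * s i := (div_mul_cancel₀ _ hsi).symm
      have htj : t j = (s j / s i) * t i := by
        rw [div_mul_eq_mul_div, eq_div_iff hsi]
        linear_combination heq
      apply hnp (Fin.castLE hmd j) (Fin.castLE hmd i) hcij.symm (s j / s i)
      rw [hst j, hst i, mul_add, ← mul_assoc, ← map_mul, ← mul_assoc, ← map_mul, ← hsj, ← htj]
  -- units in the localization
  have hunit : ∀ i : Fin d, ¬((i : ℕ) < m) → IsUnit (F (α i)) := by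
    intro i hi
    have hni : α i ∉ Ip := fun hmem => hi ((hvan i).1 (hIple _ hmem))
    exact (IsLocalization.AtPrime.isUnit_to_map_iff (Localization.AtPrime Ip) Ip (α i)).2 hni
  -- the set of indices below m
  set Slt : Finset (Fin d) := Finset.univ.filter (fun k : Fin d => (k : ℕ) < m) with hSlt
  have hSlt_eq : Slt = Finset.image (Fin.castLE hmd) Finset.univ := by
    ext k
    simp only [hSlt, Finset.mem_filter, Finset.mem_univ, true_and, Finset.mem_image]
    constructor
    · intro hk
      exact ⟨⟨(k : ℕ), hk⟩, by ext; simp⟩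
    · rintro ⟨a, rfl⟩
      simpa using a.isLt
  have hScard : Slt.card = m := by
    rw [hSlt_eq, Finset.card_image_of_injective _ (Fin.castLE_injective hmd),
      Finset.card_univ, Fintype.card_fin]
  -- each l i lies in Ip ^ (m - 1)
  have hllei : ∀ i, l i ∈ Ip ^ (m - 1) := by
    intro i
    rw [hl i, ← Finset.prod_filter_mul_prod_filter_not (Finset.univ.erase i)
      (fun k : Fin d => (k : ℕ) < m) α]
    have hmem1 : (((Finset.univ.erase i).filter (fun k : Fin d => (k : ℕ) < m)).prod α) ∈
        Ip ^ (((Finset.univ.erase i).filter (fun k : Fin d => (k : ℕ) < m)).card) :=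
      ideal_prod_mem_pow Ip _ α (fun k hk => hmemIp k (Finset.mem_filter.1 hk).2)
    have hcard : m - 1 ≤ ((Finset.univ.erase i).filter (fun k : Fin d => (k : ℕ) < m)).card := by
      rw [Finset.filter_erase]
      calc m - 1 = Slt.card - 1 := by rw [hScard]
        _ ≤ (Slt.erase i).card := Finset.pred_card_le_card_erase
    exact Ideal.mul_mem_right _ _ (Ideal.pow_le_pow_right hcard hmem1)
  -- the products over the first m lines
  set Pbig : Fin m → MvPolynomial (Fin 3) ℂ :=
    fun i => ∏ k ∈ Finset.univ.erase i, α (Fin.castLE hmd k) with hPbig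
  set Qbig : MvPolynomial (Fin 3) ℂ :=
    (Finset.univ.filter (fun k : Fin d => ¬((k : ℕ) < m))).prod α with hQbig
  have hQunit : IsUnit (F Qbig) := by
    rw [hQbig, map_prod]
    apply Finset.prod_induction _ IsUnit (fun a b ha hb => ha.mul hb) isUnit_one
    intro k hk
    exact hunit k (Finset.mem_filter.1 hk).2
  have hlsplit : ∀ i : Fin m, l (Fin.castLE hmd i) = Pbig i * Qbig := by
    intro i
    rw [hl, ← Finset.prod_filter_mul_prod_filter_not (Finset.univ.erase (Fin.castLE hmd i))
      (fun k : Fin d => (k : ℕ) < m) α]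
    congr 1
    · rw [Finset.filter_erase]
      have himg : (Finset.univ.filter (fun k : Fin d => (k : ℕ) < m)).erase (Fin.castLE hmd i)
          = Finset.image (Fin.castLE hmd) (Finset.univ.erase i) := by
        rw [← hSlt, hSlt_eq, Finset.image_erase (Fin.castLE_injective hmd)]
      rw [himg, Finset.prod_image (fun x _ y _ h => Fin.castLE_injective hmd h)]
    · rw [Finset.filter_erase, Finset.erase_eq_of_notMem]
      simp
  have hJ1 : ∀ i : Fin m, F (Pbig i) ∈
      Ideal.map F (Ideal.span (Set.range l)) := by
    intro i
    obtain ⟨u, hu⟩ := hQunit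
    have h1 : F (l (Fin.castLE hmd i)) ∈ Ideal.map F (Ideal.span (Set.range l)) :=
      Ideal.mem_map_of_mem F (Ideal.subset_span ⟨_, rfl⟩)
    have h2 : F (Pbig i) = F (l (Fin.castLE hmd i)) * ↑u⁻¹ := by
      rw [hlsplit i, map_mul, ← hu, mul_assoc, Units.mul_inv, mul_one]
    rw [h2]
    exact Ideal.mul_mem_right _ _ h1
  -- the generators of Ip ^ (m-1) are in the image ideal
  have h_gens : ∀ a b : ℕ, a + b = m - 1 →
      F (A ^ a * B ^ b) ∈ Ideal.map F (Ideal.span (Set.range l)) := by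
    intro a b hab
    obtain ⟨c, hcid⟩ := lagrange_span m hm1 s t hdetst a b hab
    have hrep : A ^ a * B ^ b = ∑ i, MvPolynomial.C (c i) * Pbig i := by
      have happ := congrArg (fun q => MvPolynomial.aeval ![A, B] q) hcid
      simp only [map_mul, map_pow, map_sum, map_prod, map_add, MvPolynomial.aeval_X,
        MvPolynomial.aeval_C, MvPolynomial.algebraMap_eq, Matrix.cons_val_zero,
        Matrix.cons_val_one, Matrix.head_cons] at happ
      rw [happ]
      apply Finset.sum_congr rfl
      intro i _
      congr 1
      rw [hPbig]
      apply Finset.prod_congr rfl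
      intro k _
      rw [hst k]
    rw [hrep, map_sum]
    apply Ideal.sum_mem
    intro i _
    rw [map_mul]
    exact Ideal.mul_mem_left _ _ (hJ1 i)
  -- conclusion
  apply le_antisymm
  · apply Ideal.map_mono
    rw [Ideal.span_le]
    rintro x ⟨i, rfl⟩
    exact hllei i
  · have hpow : Ip ^ (m - 1) = Ideal.span {A, B} ^ (m - 1) := by rw [hIpspan]
    rw [hpow, Ideal.map_le_iff_le_comap]
    exact span_pair_pow_le A B (m - 1) _ (fun a b hab => Ideal.mem_comap.2 (h_gens a b hab))
end

section
/- Suppose (A_w, Z) is a weak (k,m)-multinet on a multiarrangement of lines in P^2 with k >= 3. Then sum over p in Z of n_p^2 equals m^2. -/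
/-- Lemma 4.5(2): for a weak `(k,m)`-multinet `(A_w, Z)` on a multiarrangement
of lines in `ℙ²`, `∑_{p ∈ Z} n_p² = m²`.
The multiarrangement is a finite set `A` of lines with positive weights `w`,
partitioned into `k ≥ 3` classes `cls i`, each of total weight `m`; any two
lines from different classes meet at a point of `Z`; for each `p ∈ Z` the
weight of the lines of `cls i` through `p` is a constant `n p` independent
of `i`.  Distinct lines of the plane meet in a unique point. -/
theorem weak_multinet_sum_np_sq {Line Point : Type*} [DecidableEq Line]
    (A : Finset Line) (w : Line → ℕ) (hw : ∀ L ∈ A, 1 ≤ w L)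
    (onLine : Point → Line → Prop) [∀ p L, Decidable (onLine p L)]
    (hplane : ∀ L₁ ∈ A, ∀ L₂ ∈ A, L₁ ≠ L₂ →
      ∃! p : Point, onLine p L₁ ∧ onLine p L₂)
    (k m : ℕ) (hk : 3 ≤ k)
    (cls : Fin k → Finset Line)
    (hcover : ∀ L, L ∈ A ↔ ∃ i, L ∈ cls i)
    (hdisj : ∀ i j, i ≠ j → Disjoint (cls i) (cls j))
    (Z : Finset Point)
    (h1 : ∀ i, ∑ L ∈ cls i, w L = m)
    (h2 : ∀ i j, i ≠ j → ∀ L ∈ cls i, ∀ L' ∈ cls j,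
      ∃ p ∈ Z, onLine p L ∧ onLine p L')
    (n : Point → ℕ)
    (h3 : ∀ p ∈ Z, ∀ i, ∑ L ∈ (cls i).filter (fun L => onLine p L), w L = n p) :
    ∑ p ∈ Z, (n p) ^ 2 = m ^ 2 := by
  set i0 : Fin k := ⟨0, by omega⟩ with hi0
  set i1 : Fin k := ⟨1, by omega⟩ with hi1
  have hne : i0 ≠ i1 := by simp [hi0, hi1, Fin.ext_iff]
  have key : ∀ L ∈ cls i0, ∀ L' ∈ cls i1,
      ∑ p ∈ Z, (if onLine p L ∧ onLine p L' then w L * w L' else 0) = w L * w L' := by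
    intro L hL L' hL'
    have hLA : L ∈ A := (hcover L).2 ⟨i0, hL⟩
    have hL'A : L' ∈ A := (hcover L').2 ⟨i1, hL'⟩
    have hLL' : L ≠ L' := fun h =>
      (Finset.disjoint_left.1 (hdisj i0 i1 hne)) hL (h ▸ hL')
    obtain ⟨p₀, hp₀Z, hp₀⟩ := h2 i0 i1 hne L hL L' hL'
    obtain ⟨q, hq, huniq⟩ := hplane L hLA L' hL'A hLL'
    have hfilt : Z.filter (fun p => onLine p L ∧ onLine p L') = {p₀} := by
      ext p
      simp only [Finset.mem_filter, Finset.mem_singleton]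
      constructor
      · rintro ⟨hpZ, hp⟩
        rw [huniq p hp, ← huniq p₀ hp₀]
      · rintro rfl; exact ⟨hp₀Z, hp₀⟩
    rw [← Finset.sum_filter, hfilt, Finset.sum_singleton]
  calc ∑ p ∈ Z, n p ^ 2
      = ∑ p ∈ Z, ∑ L ∈ cls i0, ∑ L' ∈ cls i1,
          (if onLine p L ∧ onLine p L' then w L * w L' else 0) := by
        refine Finset.sum_congr rfl fun p hp => ?_
        rw [sq, show n p * n p = (∑ L ∈ (cls i0).filter (fun L => onLine p L), w L) *
            (∑ L ∈ (cls i1).filter (fun L => onLine p L), w L) from by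
          rw [h3 p hp i0, h3 p hp i1], Finset.sum_filter, Finset.sum_filter,
          Finset.sum_mul_sum]
        simp only [ite_and, mul_ite, ite_mul, mul_zero, zero_mul]
        refine Finset.sum_congr rfl fun L _ => ?_
        by_cases hPL : onLine p L <;> simp [hPL]
    _ = ∑ L ∈ cls i0, ∑ L' ∈ cls i1, ∑ p ∈ Z,
          (if onLine p L ∧ onLine p L' then w L * w L' else 0) := by
        rw [Finset.sum_comm]
        exact Finset.sum_congr rfl fun L _ => Finset.sum_comm
    _ = ∑ L ∈ cls i0, ∑ L' ∈ cls i1, w L * w L' := by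
        exact Finset.sum_congr rfl fun L hL => Finset.sum_congr rfl fun L' hL' =>
          key L hL L' hL'
    _ = m ^ 2 := by rw [← Finset.sum_mul_sum, h1, h1, sq]
end

section
/- Suppose (A_w, Z) is a weak (k,m)-multinet on a multiarrangement of lines in P^2 with k >= 3. Then for each line L of the multiarrangement, the sum over points p in Z lying on L of n_p equals m. -/
/-- Lemma 4.5(3): for a weak `(k,m)`-multinet `(A_w, Z)` on a multiarrangement
of lines in `ℙ²`, for each line `L` of the multiarrangement, `∑_{p ∈ Z, p ∈ L} n_p = m`.
The multiarrangement is a finite set `A` of lines with positive weights `w`,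
partitioned into `k ≥ 3` classes `cls i`, each of total weight `m`; any two
lines from different classes meet at a point of `Z`; for each `p ∈ Z` the
weight of the lines of `cls i` through `p` is a constant `n p` independent
of `i`.  Distinct lines of the plane meet in a unique point. -/
theorem weak_multinet_line_sum {Line Point : Type*} [DecidableEq Line]
    (A : Finset Line) (w : Line → ℕ) (hw : ∀ L ∈ A, 1 ≤ w L)
    (onLine : Point → Line → Prop) [∀ p L, Decidable (onLine p L)]
    (hplane : ∀ L₁ ∈ A, ∀ L₂ ∈ A, L₁ ≠ L₂ →
      ∃! p : Point, onLine p L₁ ∧ onLine p L₂)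
    (k m : ℕ) (hk : 3 ≤ k)
    (cls : Fin k → Finset Line)
    (hcover : ∀ L, L ∈ A ↔ ∃ i, L ∈ cls i)
    (hdisj : ∀ i j, i ≠ j → Disjoint (cls i) (cls j))
    (Z : Finset Point)
    (h1 : ∀ i, ∑ L ∈ cls i, w L = m)
    (h2 : ∀ i j, i ≠ j → ∀ L ∈ cls i, ∀ L' ∈ cls j,
      ∃ p ∈ Z, onLine p L ∧ onLine p L')
    (n : Point → ℕ)
    (h3 : ∀ p ∈ Z, ∀ i, ∑ L ∈ (cls i).filter (fun L => onLine p L), w L = n p) :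
    ∀ L ∈ A, ∑ p ∈ Z.filter (fun p => onLine p L), n p = m := by
  intro L hL
  obtain ⟨i, hi⟩ := (hcover L).1 hL
  obtain ⟨j, hj⟩ : ∃ j : Fin k, j ≠ i := by
    rcases i with ⟨iv, hiv⟩
    refine ⟨⟨if iv = 0 then 1 else 0, by split <;> omega⟩, ?_⟩
    simp only [Ne, Fin.mk.injEq]
    split <;> omega
  have key : ∀ L' ∈ cls j,
      ((Z.filter (fun p => onLine p L)).filter (fun p => onLine p L')).card = 1 := by
    intro L' hL'
    have hL'A : L' ∈ A := (hcover L').2 ⟨j, hL'⟩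
    have hne : L ≠ L' := by
      rintro rfl
      exact (Finset.disjoint_left.1 (hdisj j i hj)) hL' hi
    obtain ⟨p, hpZ, hp1, hp2⟩ := h2 i j (Ne.symm hj) L hi L' hL'
    obtain ⟨q, hq, huniq⟩ := hplane L hL L' hL'A hne
    rw [Finset.card_eq_one]
    refine ⟨p, ?_⟩
    ext x
    simp only [Finset.mem_singleton, Finset.mem_filter]
    constructor
    · rintro ⟨⟨hxZ, hxL⟩, hxL'⟩
      rw [huniq x ⟨hxL, hxL'⟩, huniq p ⟨hp1, hp2⟩]
    · rintro rfl
      exact ⟨⟨hpZ, hp1⟩, hp2⟩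
  calc ∑ p ∈ Z.filter (fun p => onLine p L), n p
      = ∑ p ∈ Z.filter (fun p => onLine p L),
          ∑ L' ∈ (cls j).filter (fun L' => onLine p L'), w L' := by
        refine Finset.sum_congr rfl fun p hp => ?_
        exact (h3 p (Finset.mem_filter.1 hp).1 j).symm
    _ = ∑ p ∈ Z.filter (fun p => onLine p L),
          ∑ L' ∈ cls j, if onLine p L' then w L' else 0 := by
        simp [Finset.sum_filter]
    _ = ∑ L' ∈ cls j, ∑ p ∈ Z.filter (fun p => onLine p L),
          if onLine p L' then w L' else 0 := Finset.sum_comm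
    _ = ∑ L' ∈ cls j,
          ((Z.filter (fun p => onLine p L)).filter (fun p => onLine p L')).card * w L' := by
        refine Finset.sum_congr rfl fun L' _ => ?_
        rw [← Finset.sum_filter, Finset.sum_const, smul_eq_mul]
    _ = ∑ L' ∈ cls j, w L' := by
        refine Finset.sum_congr rfl fun L' hL' => ?_
        rw [key L' hL', one_mul]
    _ = m := h1 j
end

section
/- Let alpha_1 = x, alpha_2 = y, alpha_3 = z, alpha_4 = x+y+z in C[x,y,z]. Then the kernel of the map C[y_1,y_2,y_3,y_4] -> C(x,y,z) sending y_i to 1/alpha_i is the principal ideal generated by y_2y_3y_4 + y_1y_3y_4 + y_1y_2y_4 - y_1y_2y_3, and this cubic polynomial is irreducible. -/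
open MvPolynomial

set_option maxHeartbeats 2000000
set_option synthInstance.maxHeartbeats 1000000

noncomputable section OTFourLinesAux

abbrev A3 : Type := MvPolynomial (Fin 3) ℂ
abbrev K3 : Type := FractionRing A3

def ι3 : A3 →+* K3 := algebraMap A3 K3

lemma ι3_inj : Function.Injective ι3 := IsFractionRing.injective A3 K3

def τ3 : A3 →+* K3 := eval₂Hom (ι3.comp (algebraMap ℂ A3)) fun i => (ι3 (X i))⁻¹

lemma ιX_ne (i : Fin 3) : ι3 (X i) ≠ 0 := by
  intro h
  exact MvPolynomial.X_ne_zero i (ι3_inj (by rw [h, map_zero]))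

lemma ιs_ne : ι3 (X 0 + X 1 + X 2) ≠ 0 := by
  intro h
  have h2 : (X 0 + X 1 + X 2 : A3) = 0 := ι3_inj (by rw [h, map_zero])
  have h3 := congrArg (eval fun _ : Fin 3 => (1 : ℂ)) h2
  simp at h3
  norm_num at h3

lemma pow_mul_τ_monomial (N : ℕ) (m : Fin 3 →₀ ℕ) (c : ℂ) (hm : ∀ i, m i ≤ N) :
    ι3 (X 0 * X 1 * X 2) ^ N * τ3 (monomial m c) =
      ι3 (monomial (Finsupp.equivFunOnFinite.symm fun i => N - m i) c) := by
  have key : ∀ i : Fin 3, ι3 (X i) ^ N * ((ι3 (X i))⁻¹) ^ (m i) = ι3 (X i) ^ (N - m i) := by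
    intro i
    rw [inv_pow, ← pow_sub₀ _ (ιX_ne i) (hm i)]
  have hL : τ3 (monomial m c) =
      ι3 (MvPolynomial.C c) * ∏ i, ((ι3 (X i))⁻¹) ^ m i := by
    show eval₂ _ _ _ = _
    rw [eval₂_monomial, Finsupp.prod_fintype _ _ fun i => pow_zero _]
    simp [RingHom.comp_apply, MvPolynomial.algebraMap_eq, ι3]
  have hR : (monomial (Finsupp.equivFunOnFinite.symm fun i => N - m i) c : A3) =
      MvPolynomial.C c * ∏ i, X i ^ (N - m i) := by
    rw [monomial_eq, Finsupp.prod_fintype _ _ fun i => pow_zero _]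
    simp
  rw [hL, hR]
  conv_rhs => rw [map_mul, map_prod]
  simp only [map_pow, map_mul, Fin.prod_univ_three, mul_pow]
  rw [← key 0, ← key 1, ← key 2]
  ring

lemma τ3_inj : Function.Injective τ3 := by
  refine (injective_iff_map_eq_zero τ3).mpr ?_
  intro r hr
  by_contra hr0
  set N := r.totalDegree with hN
  have hmN : ∀ m ∈ r.support, ∀ i, m i ≤ N := by
    intro m hm i
    have h1 : m i ≤ m.sum fun _ e => e := by
      rw [Finsupp.sum_fintype _ _ fun _ => rfl]
      exact Finset.single_le_sum (fun j _ => Nat.zero_le (m j)) (Finset.mem_univ i)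
    exact h1.trans (le_totalDegree hm)
  set r' : A3 := ∑ m ∈ r.support,
      monomial (Finsupp.equivFunOnFinite.symm fun i => N - m i) (coeff m r) with hr'
  have hid : ι3 (X 0 * X 1 * X 2) ^ N * τ3 r = ι3 r' := by
    conv_lhs => rw [← support_sum_monomial_coeff r]
    rw [map_sum, Finset.mul_sum, hr', map_sum]
    exact Finset.sum_congr rfl fun m hm => pow_mul_τ_monomial N m _ (hmN m hm)
  rw [hr, mul_zero] at hid
  have hr'0 : r' = 0 := ι3_inj (by rw [← hid, map_zero])
  have hsupp : r.support.Nonempty :=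
    Finset.nonempty_iff_ne_empty.mpr fun h => hr0 (support_eq_empty.mp h)
  obtain ⟨m₀, hm₀⟩ := hsupp
  have h0 : coeff (Finsupp.equivFunOnFinite.symm fun i => N - m₀ i) r' = coeff m₀ r := by
    rw [hr', coeff_sum, Finset.sum_eq_single m₀]
    · simp [coeff_monomial]
    · intro m hm hne
      rw [coeff_monomial, if_neg]
      intro heq
      apply hne
      have hfn := congrArg (fun s : Fin 3 →₀ ℕ => (s : Fin 3 → ℕ)) heq
      ext i
      have h3 : N - m i = N - m₀ i := by
        have := congrFun hfn i
        simpa using this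
      have h1 := hmN m hm i
      have h2 := hmN m₀ hm₀ i
      omega
    · intro h; exact absurd hm₀ h
  rw [hr'0] at h0
  simp only [coeff_zero] at h0
  exact (mem_support_iff.mp hm₀) h0.symm

def cA : A3 := X 0 * X 1 + X 0 * X 2 + X 1 * X 2
def bA : A3 := X 0 * X 1 * X 2
def Gp : Polynomial A3 := Polynomial.C cA * Polynomial.X - Polynomial.C bA
def φ3 : Polynomial A3 →+* K3 := Polynomial.eval₂RingHom τ3 ((ι3 (X 0 + X 1 + X 2))⁻¹)

lemma cA_ne : cA ≠ 0 := by
  intro h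
  have h3 := congrArg (eval fun _ : Fin 3 => (1 : ℂ)) h
  simp [cA] at h3
  norm_num at h3

lemma bA_ne : bA ≠ 0 :=
  mul_ne_zero (mul_ne_zero (X_ne_zero 0) (X_ne_zero 1)) (X_ne_zero 2)

lemma Gp_natDegree : Gp.natDegree = 1 := by
  have h : Gp = Polynomial.C cA * Polynomial.X + Polynomial.C (-bA) := by
    rw [Gp, map_neg]; ring
  rw [h]
  exact Polynomial.natDegree_linear cA_ne

lemma Gp_ne : Gp ≠ 0 := by
  intro h
  have := Gp_natDegree
  rw [h] at this
  simp at this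

lemma Gp_coeff_one : Gp.coeff 1 = cA := by simp [Gp]

lemma Gp_coeff_zero : Gp.coeff 0 = -bA := by simp [Gp]

lemma τ3_X (i : Fin 3) : τ3 (X i) = (ι3 (X i))⁻¹ := by simp [τ3]

lemma φ3_C (a : A3) : φ3 (Polynomial.C a) = τ3 a := by simp [φ3]

lemma τ3_C (r : ℂ) : τ3 (MvPolynomial.C r) = ι3 (MvPolynomial.C r) := by
  simp [τ3, MvPolynomial.algebraMap_eq]

lemma φ3_G : φ3 Gp = 0 := by
  have h0 := ιX_ne 0
  have h1 := ιX_ne 1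
  have h2 := ιX_ne 2
  have hs : ι3 (X 0) + ι3 (X 1) + ι3 (X 2) ≠ 0 := by
    rw [← map_add, ← map_add]; exact ιs_ne
  have hc : τ3 cA = (ι3 (X 0))⁻¹ * (ι3 (X 1))⁻¹ + (ι3 (X 0))⁻¹ * (ι3 (X 2))⁻¹
      + (ι3 (X 1))⁻¹ * (ι3 (X 2))⁻¹ := by
    simp only [τ3, cA, coe_eval₂Hom, eval₂_add, eval₂_mul, eval₂_X]
  have hb : τ3 bA = (ι3 (X 0))⁻¹ * (ι3 (X 1))⁻¹ * (ι3 (X 2))⁻¹ := by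
    simp only [τ3, bA, coe_eval₂Hom, eval₂_mul, eval₂_X]
  have hsum : ι3 (X 0 + X 1 + X 2) = ι3 (X 0) + ι3 (X 1) + ι3 (X 2) := by
    rw [map_add, map_add]
  have hkey : (ι3 (X 0))⁻¹ * (ι3 (X 1))⁻¹ + (ι3 (X 0))⁻¹ * (ι3 (X 2))⁻¹
      + (ι3 (X 1))⁻¹ * (ι3 (X 2))⁻¹
      = (ι3 (X 0))⁻¹ * (ι3 (X 1))⁻¹ * (ι3 (X 2))⁻¹ * (ι3 (X 0) + ι3 (X 1) + ι3 (X 2)) := by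
    field_simp
    ring
  simp only [φ3, Gp, Polynomial.coe_eval₂RingHom, Polynomial.eval₂_sub,
    Polynomial.eval₂_mul, Polynomial.eval₂_C, Polynomial.eval₂_X]
  rw [sub_eq_zero, hc, hb, hsum, hkey, mul_assoc, mul_inv_cancel₀ hs, mul_one]

lemma key_div : ∀ (n : ℕ) (p : Polynomial A3), p.natDegree ≤ n → φ3 p = 0 →
    ∃ m : ℕ, Gp ∣ Polynomial.C cA ^ m * p := by
  intro n
  induction n with
  | zero =>
    intro p hdeg hp
    have hpC : p = Polynomial.C (p.coeff 0) :=
      Polynomial.eq_C_of_natDegree_eq_zero (Nat.le_zero.mp hdeg)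
    have hτ : τ3 (p.coeff 0) = 0 := by
      rw [hpC, φ3_C] at hp; exact hp
    have h0 : p.coeff 0 = 0 := (injective_iff_map_eq_zero τ3).mp τ3_inj _ hτ
    exact ⟨0, by rw [hpC, h0]; simp⟩
  | succ n ih =>
    intro p hdeg hp
    by_cases hd : p.natDegree ≤ n
    · exact ih p hd hp
    · have hdn : p.natDegree = n + 1 := le_antisymm hdeg (Nat.not_le.mp hd)
      set a := p.coeff (n + 1) with ha
      set q : Polynomial A3 := Polynomial.C a * Polynomial.X ^ n * Gp with hq
      have hqexp : q = Polynomial.C (a * cA) * Polynomial.X ^ (n + 1)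
          - Polynomial.C (a * bA) * Polynomial.X ^ n := by
        rw [hq, Gp]
        simp only [map_mul]
        ring
      set p₂ := Polynomial.C cA * p - q with hp₂
      have hcoeff_q : ∀ M, q.coeff M =
          (if M = n + 1 then a * cA else 0) - (if M = n then a * bA else 0) := by
        intro M
        rw [hqexp, Polynomial.coeff_sub, Polynomial.coeff_C_mul, Polynomial.coeff_C_mul,
          Polynomial.coeff_X_pow, Polynomial.coeff_X_pow]
        simp only [mul_ite, mul_one, mul_zero]
      have h2deg : p₂.natDegree ≤ n := by
        rw [Polynomial.natDegree_le_iff_coeff_eq_zero]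
        intro M hM
        rw [hp₂, Polynomial.coeff_sub, Polynomial.coeff_C_mul, hcoeff_q]
        by_cases hM1 : M = n + 1
        · subst hM1
          rw [if_pos rfl, if_neg (by omega)]
          rw [← ha]
          ring
        · rw [if_neg (by omega), if_neg (by omega),
            Polynomial.coeff_eq_zero_of_natDegree_lt (show p.natDegree < M by omega)]
          ring
      have hφ2 : φ3 p₂ = 0 := by
        rw [hp₂, map_sub, map_mul, hp, mul_zero, hq, map_mul, φ3_G, mul_zero, sub_zero]
      obtain ⟨m, hm⟩ := ih p₂ h2deg hφ2
      refine ⟨m + 1, ?_⟩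
      have hrw : Polynomial.C cA ^ (m + 1) * p
          = Polynomial.C cA ^ m * p₂ + Polynomial.C cA ^ m * q := by
        rw [hp₂]; ring
      rw [hrw]
      exact dvd_add hm ⟨Polynomial.C cA ^ m * (Polynomial.C a * Polynomial.X ^ n),
        by rw [hq]; ring⟩

lemma prime_X3 (i : Fin 3) : Prime (X i : A3) := by
  set e : MvPolynomial (Fin 3) ℂ ≃ₐ[ℂ] Polynomial (MvPolynomial (Fin 2) ℂ) :=
    (renameEquiv ℂ (Equiv.swap i 0)).trans (MvPolynomial.finSuccEquiv ℂ 2) with he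
  have hX : e (X i) = Polynomial.X := by
    rw [he, AlgEquiv.trans_apply, renameEquiv_apply, rename_X, Equiv.swap_apply_left,
      finSuccEquiv_X_zero]
  rw [← MulEquiv.prime_iff e.toRingEquiv.toMulEquiv]
  have hcoe : e.toRingEquiv.toMulEquiv (X i) = Polynomial.X := hX
  rw [hcoe]
  exact Polynomial.prime_X

lemma X_not_dvd_cA (i : Fin 3) : ¬ (X i : A3) ∣ cA := by
  rintro ⟨q, hq⟩
  fin_cases i
  · have h := congrArg (eval ![0, 1, 1]) hq
    simp [cA] at h
  · have h := congrArg (eval ![1, 0, 1]) hq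
    simp [cA] at h
  · have h := congrArg (eval ![1, 1, 0]) hq
    simp [cA] at h

lemma unit_of_deg_zero_factor (s t : Polynomial A3) (h : Gp = s * t)
    (ht : t.natDegree = 0) : IsUnit t := by
  have ht0 : t ≠ 0 := fun h0 => Gp_ne (by rw [h, h0, mul_zero])
  set t₀ := t.coeff 0 with ht₀
  have htC : t = Polynomial.C t₀ := Polynomial.eq_C_of_natDegree_eq_zero ht
  have ht₀0 : t₀ ≠ 0 := fun h0 => ht0 (by rw [htC, h0, map_zero])
  have hdvd_c : t₀ ∣ cA := ⟨s.coeff 1, by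
    rw [← Gp_coeff_one, h, htC, Polynomial.coeff_mul_C]; ring⟩
  have hdvd_b : t₀ ∣ bA := by
    have hneg : t₀ ∣ -bA := ⟨s.coeff 0, by
      rw [← Gp_coeff_zero, h, htC, Polynomial.coeff_mul_C]; ring⟩
    exact dvd_neg.mp hneg
  rw [htC, Polynomial.isUnit_C]
  by_contra hu
  obtain ⟨π, hπ, hπd⟩ := WfDvdMonoid.exists_irreducible_factor hu ht₀0
  have hπp : Prime π := UniqueFactorizationMonoid.irreducible_iff_prime.mp hπ
  have hπb : π ∣ X 0 * X 1 * X 2 := hπd.trans hdvd_b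
  have hXi : ∃ j : Fin 3, π ∣ X j := by
    rcases hπp.2.2 _ _ hπb with h1 | h1
    · rcases hπp.2.2 _ _ h1 with h2 | h2
      exacts [⟨0, h2⟩, ⟨1, h2⟩]
    · exact ⟨2, h1⟩
  obtain ⟨j, hj⟩ := hXi
  have hassoc : Associated π (X j) :=
    hπ.associated_of_dvd (prime_X3 j).irreducible hj
  exact X_not_dvd_cA j (hassoc.symm.dvd.trans (hπd.trans hdvd_c))

lemma Gp_irred : Irreducible Gp := by
  constructor
  · intro hu
    have h := Polynomial.natDegree_eq_zero_of_isUnit hu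
    rw [Gp_natDegree] at h
    exact one_ne_zero h
  · intro s t h
    have hs0 : s ≠ 0 := fun h0 => Gp_ne (by rw [h, h0, zero_mul])
    have ht0 : t ≠ 0 := fun h0 => Gp_ne (by rw [h, h0, mul_zero])
    have hdeg : s.natDegree + t.natDegree = 1 := by
      rw [← Polynomial.natDegree_mul hs0 ht0, ← h, Gp_natDegree]
    by_cases hts : t.natDegree = 0
    · exact Or.inr (unit_of_deg_zero_factor s t h hts)
    · have hss : s.natDegree = 0 := by omega
      exact Or.inl (unit_of_deg_zero_factor t s (by rw [h]; ring) hss)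

lemma ker_φ3 : RingHom.ker φ3 = Ideal.span {Gp} := by
  apply le_antisymm
  · intro p hp
    rw [RingHom.mem_ker] at hp
    obtain ⟨m, hm⟩ := key_div p.natDegree p le_rfl hp
    rw [Ideal.mem_span_singleton]
    have hGp : Prime Gp := UniqueFactorizationMonoid.irreducible_iff_prime.mp Gp_irred
    have hnc : ¬ Gp ∣ Polynomial.C cA := by
      intro hdvd
      have hCne : (Polynomial.C cA : Polynomial A3) ≠ 0 := by
        simpa using cA_ne
      have hle := Polynomial.natDegree_le_of_dvd hdvd hCne
      rw [Gp_natDegree, Polynomial.natDegree_C] at hle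
      omega
    rcases hGp.2.2 _ _ hm with h | h
    · exact absurd (hGp.dvd_of_dvd_pow h) hnc
    · exact h
  · rw [Ideal.span_le]
    intro x hx
    rw [Set.mem_singleton_iff] at hx
    subst hx
    exact RingHom.mem_ker.mpr φ3_G

def eA : MvPolynomial (Fin 4) ℂ ≃ₐ[ℂ] Polynomial A3 :=
  (renameEquiv ℂ (finRotate 4)).trans (MvPolynomial.finSuccEquiv ℂ 3)

lemma eA_X0 : eA (X 0) = Polynomial.C (X 0) := by
  rw [eA, AlgEquiv.trans_apply, renameEquiv_apply, rename_X,
    show (finRotate 4) (0 : Fin 4) = (0 : Fin 3).succ by decide, finSuccEquiv_X_succ]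

lemma eA_X1 : eA (X 1) = Polynomial.C (X 1) := by
  rw [eA, AlgEquiv.trans_apply, renameEquiv_apply, rename_X,
    show (finRotate 4) (1 : Fin 4) = (1 : Fin 3).succ by decide, finSuccEquiv_X_succ]

lemma eA_X2 : eA (X 2) = Polynomial.C (X 2) := by
  rw [eA, AlgEquiv.trans_apply, renameEquiv_apply, rename_X,
    show (finRotate 4) (2 : Fin 4) = (2 : Fin 3).succ by decide, finSuccEquiv_X_succ]

lemma eA_X3 : eA (X 3) = Polynomial.X := by
  rw [eA, AlgEquiv.trans_apply, renameEquiv_apply, rename_X,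
    show (finRotate 4) (3 : Fin 4) = (0 : Fin 4) by decide, finSuccEquiv_X_zero]

lemma eA_C (r : ℂ) : eA (MvPolynomial.C r) = Polynomial.C (MvPolynomial.C r) := by
  have h1 : (MvPolynomial.C r : MvPolynomial (Fin 4) ℂ)
      = algebraMap ℂ (MvPolynomial (Fin 4) ℂ) r := rfl
  have h2 : (Polynomial.C (MvPolynomial.C r) : Polynomial A3)
      = algebraMap ℂ (Polynomial A3) r := rfl
  rw [h1, h2, AlgEquiv.commutes]

end OTFourLinesAux

/-- Example 2.4: for `α₁ = x, α₂ = y, α₃ = z, α₄ = x+y+z`, the kernel of the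
map `ℂ[y₁,y₂,y₃,y₄] → ℂ(x,y,z)`, `yᵢ ↦ 1/αᵢ`, is the principal ideal
generated by the cubic `y₂y₃y₄ + y₁y₃y₄ + y₁y₂y₄ - y₁y₂y₃`, and this cubic
is irreducible. -/
theorem OT_ideal_four_lines
    (α : Fin 4 → MvPolynomial (Fin 3) ℂ)
    (hα : α = ![MvPolynomial.X 0, MvPolynomial.X 1, MvPolynomial.X 2,
      MvPolynomial.X 0 + MvPolynomial.X 1 + MvPolynomial.X 2])
    (g : MvPolynomial (Fin 4) ℂ)
    (hg : g = MvPolynomial.X 1 * MvPolynomial.X 2 * MvPolynomial.X 3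
      + MvPolynomial.X 0 * MvPolynomial.X 2 * MvPolynomial.X 3
      + MvPolynomial.X 0 * MvPolynomial.X 1 * MvPolynomial.X 3
      - MvPolynomial.X 0 * MvPolynomial.X 1 * MvPolynomial.X 2) :
    RingHom.ker (MvPolynomial.eval₂Hom
      ((algebraMap (MvPolynomial (Fin 3) ℂ)
          (FractionRing (MvPolynomial (Fin 3) ℂ))).comp
        (algebraMap ℂ (MvPolynomial (Fin 3) ℂ)))
      (fun i => (algebraMap (MvPolynomial (Fin 3) ℂ)
          (FractionRing (MvPolynomial (Fin 3) ℂ)) (α i))⁻¹))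
      = Ideal.span {g} ∧ Irreducible g := by
  subst hα hg
  set Φ : MvPolynomial (Fin 4) ℂ →+* K3 := MvPolynomial.eval₂Hom
      ((algebraMap (MvPolynomial (Fin 3) ℂ)
          (FractionRing (MvPolynomial (Fin 3) ℂ))).comp
        (algebraMap ℂ (MvPolynomial (Fin 3) ℂ)))
      (fun i => (algebraMap (MvPolynomial (Fin 3) ℂ)
          (FractionRing (MvPolynomial (Fin 3) ℂ))
          (![MvPolynomial.X 0, MvPolynomial.X 1, MvPolynomial.X 2,
            MvPolynomial.X 0 + MvPolynomial.X 1 + MvPolynomial.X 2] i))⁻¹) with hΦ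
  set g : MvPolynomial (Fin 4) ℂ := MvPolynomial.X 1 * MvPolynomial.X 2 * MvPolynomial.X 3
      + MvPolynomial.X 0 * MvPolynomial.X 2 * MvPolynomial.X 3
      + MvPolynomial.X 0 * MvPolynomial.X 1 * MvPolynomial.X 3
      - MvPolynomial.X 0 * MvPolynomial.X 1 * MvPolynomial.X 2 with hgdef
  have hEg : eA g = Gp := by
    rw [hgdef]
    simp only [map_add, map_sub, map_mul, eA_X0, eA_X1, eA_X2, eA_X3]
    rw [Gp]
    simp only [cA, bA, map_add, map_mul]
    ring
  have hcomp : Φ = φ3.comp eA.toAlgHom.toRingHom := by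
    apply MvPolynomial.ringHom_ext
    · intro r
      show Φ (MvPolynomial.C r) = φ3 (eA (MvPolynomial.C r))
      rw [eA_C, φ3_C, τ3_C, hΦ]
      simp only [coe_eval₂Hom, eval₂_C]
      simp [ι3, MvPolynomial.algebraMap_eq]
    · intro i
      fin_cases i
      · show Φ (X 0) = φ3 (eA (X 0))
        rw [eA_X0, φ3_C, τ3_X, hΦ]
        simp [ι3]
      · show Φ (X 1) = φ3 (eA (X 1))
        rw [eA_X1, φ3_C, τ3_X, hΦ]
        simp [ι3]
      · show Φ (X 2) = φ3 (eA (X 2))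
        rw [eA_X2, φ3_C, τ3_X, hΦ]
        simp [ι3]
      · show Φ (X 3) = φ3 (eA (X 3))
        rw [eA_X3, hΦ]
        simp [φ3, ι3]
  have hdvd_iff : ∀ u v : MvPolynomial (Fin 4) ℂ, eA u ∣ eA v ↔ u ∣ v := by
    intro u v
    constructor
    · rintro ⟨w, hw⟩
      refine ⟨eA.symm w, eA.injective ?_⟩
      rw [map_mul, hw]
      simp
    · rintro ⟨w, hw⟩
      exact ⟨eA w, by rw [hw, map_mul]⟩
  constructor
  · ext x
    rw [RingHom.mem_ker, Ideal.mem_span_singleton, hcomp]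
    have : (φ3.comp eA.toAlgHom.toRingHom) x = φ3 (eA x) := rfl
    rw [this, ← RingHom.mem_ker, ker_φ3, Ideal.mem_span_singleton, ← hEg, hdvd_iff]
  · exact (MulEquiv.irreducible_iff (eA : MvPolynomial (Fin 4) ℂ ≃* Polynomial A3)).mp
      (by rw [show (eA : MvPolynomial (Fin 4) ℂ ≃* Polynomial A3) g = eA g from rfl, hEg]
          exact Gp_irred)
end
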